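/- For every $\delta > 0$ there exists $x_0$ such that for all real $x \ge x_0$, the number of primes less than or equal to $x$ is at most $(\log 4 + \delta) \frac{x}{\log x}$. -/

import Mathlib

open Finset Filter Real

/-- Chebyshev theta bound from primorial ≤ 4^n. -/
lemma theta_le (n : ℕ) :
    ∑ p ∈ (range (n + 1)).filter Nat.Prime, Real.log p ≤ n * Real.log 4 := by
  have h1 : Real.log (primorial n : ℝ) ≤ Real.log ((4 : ℝ) ^ n) := by
    apply Real.log_le_log (by exact_mod_cast primorial_pos n)
    exact_mod_cast primorial_le_4_pow n
  have h2 : Real.log (primorial n : ℝ)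
      = ∑ p ∈ (range (n + 1)).filter Nat.Prime, Real.log p := by
    rw [primorial, Nat.cast_prod, Real.log_prod]
    intro p hp
    have := (mem_filter.mp hp).2.pos
    positivity
  rw [h2, Real.log_pow] at h1
  exact h1

lemma pi_eq_card (n : ℕ) :
    (Nat.primeCounting n : ℝ) = ((range (n + 1)).filter Nat.Prime).card := by
  rw [Nat.primeCounting, ← Nat.primesBelow_card_eq_primeCounting', Nat.primesBelow]

/-- Key counting bound: for `1 < y`, `0 ≤ x`,
π(⌊x⌋) ≤ y + 1 + x * log 4 / log y. -/
lemma pi_bound {x y : ℝ} (hy : 1 < y) (hx : 0 ≤ x) :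
    (Nat.primeCounting ⌊x⌋₊ : ℝ) ≤ y + 1 + x * Real.log 4 / Real.log y := by
  set n := ⌊x⌋₊
  set S := (range (n + 1)).filter Nat.Prime with hS
  have hlogy : 0 < Real.log y := Real.log_pos hy
  set S₁ := S.filter (fun p : ℕ => (p : ℝ) ≤ y) with hS1
  set S₂ := S.filter (fun p : ℕ => ¬ (p : ℝ) ≤ y) with hS2
  have hcard : S.card = S₁.card + S₂.card :=
    (Finset.card_filter_add_card_filter_not (fun p : ℕ => (p : ℝ) ≤ y)).symm
  -- card S₁ ≤ y + 1
  have h1 : (S₁.card : ℝ) ≤ y + 1 := by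
    have hsub : S₁ ⊆ range (⌊y⌋₊ + 1) := by
      intro p hp
      rw [hS1, mem_filter] at hp
      exact mem_range.mpr (Nat.lt_succ_of_le (Nat.le_floor hp.2))
    have := Finset.card_le_card hsub
    rw [Finset.card_range] at this
    calc (S₁.card : ℝ) ≤ (⌊y⌋₊ : ℝ) + 1 := by exact_mod_cast this
    _ ≤ y + 1 := by
      have := Nat.floor_le (le_of_lt (lt_trans one_pos hy))
      linarith
  -- card S₂ * log y ≤ x * log 4
  have h2 : (S₂.card : ℝ) ≤ x * Real.log 4 / Real.log y := by
    rw [le_div_iff₀ hlogy]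
    have hstep : (S₂.card : ℝ) * Real.log y ≤ ∑ p ∈ S₂, Real.log p := by
      rw [mul_comm]
      have := Finset.card_nsmul_le_sum S₂ (fun p => Real.log (p : ℝ)) (Real.log y)
        (fun p hp => by
          rw [hS2, mem_filter] at hp
          exact Real.log_le_log (lt_trans one_pos hy) (le_of_lt (lt_of_not_ge hp.2)))
      simpa [nsmul_eq_mul, mul_comm] using this
    have hsum : ∑ p ∈ S₂, Real.log p ≤ ∑ p ∈ S, Real.log p := by
      apply Finset.sum_le_sum_of_subset_of_nonneg (Finset.filter_subset _ _)
      intro p hp _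
      rw [hS, mem_filter] at hp
      exact Real.log_nonneg (by exact_mod_cast hp.2.one_lt.le)
    have htheta := theta_le n
    have hn : (n : ℝ) ≤ x := Nat.floor_le hx
    have hlog4 : 0 ≤ Real.log 4 := Real.log_nonneg (by norm_num)
    calc (S₂.card : ℝ) * Real.log y ≤ ∑ p ∈ S, Real.log p := le_trans hstep hsum
    _ ≤ n * Real.log 4 := htheta
    _ ≤ x * Real.log 4 := by nlinarith
  rw [pi_eq_card, ← hS]
  push_cast [hcard]
  linarith

theorem chebyshev_upper_bound :
    ∀ δ : ℝ, 0 < δ → ∃ x₀ : ℝ, ∀ x : ℝ, x₀ ≤ x →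
      (Nat.primeCounting ⌊x⌋₊ : ℝ) ≤ (Real.log 4 + δ) * (x / Real.log x) := by
  intro δ hδ
  have hlog4 : 0 < Real.log 4 := Real.log_pos (by norm_num)
  -- choose ε
  set ε : ℝ := (δ / 2) / (Real.log 4 + δ / 2) with hε
  have hεpos : 0 < ε := by positivity
  have hε1 : ε < 1 := by
    rw [hε, div_lt_one (by linarith)]
    linarith
  have hkey : Real.log 4 ≤ (1 - ε) * (Real.log 4 + δ / 2) := by
    rw [hε]
    field_simp
    linarith
  -- eventual bounds
  have h₁ : ∀ᶠ x : ℝ in atTop, Real.log x ≤ (δ / 4) * x ^ ε := by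
    have := (isLittleO_log_rpow_atTop hεpos).bound (c := δ / 4) (by positivity)
    filter_upwards [this, eventually_ge_atTop (1 : ℝ)] with x hx hx1
    have h1 : 0 ≤ Real.log x := Real.log_nonneg hx1
    have h2 : 0 ≤ x ^ ε := Real.rpow_nonneg (by linarith) ε
    calc Real.log x = |Real.log x| := (abs_of_nonneg h1).symm
    _ ≤ δ / 4 * ‖x ^ ε‖ := hx
    _ = δ / 4 * x ^ ε := by rw [Real.norm_eq_abs, abs_of_nonneg h2]
  have h₂ : ∀ᶠ x : ℝ in atTop, Real.log x ≤ (δ / 4) * x := by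
    filter_upwards [h₁, eventually_ge_atTop (1 : ℝ)] with x hx hx1
    have : x ^ ε ≤ x := by
      calc x ^ ε ≤ x ^ (1 : ℝ) :=
        Real.rpow_le_rpow_of_exponent_le hx1 hε1.le
      _ = x := Real.rpow_one x
    nlinarith [Real.rpow_nonneg (le_trans zero_le_one hx1) ε]
  rw [eventually_atTop] at h₁ h₂
  obtain ⟨a₁, ha₁⟩ := h₁
  obtain ⟨a₂, ha₂⟩ := h₂
  refine ⟨max (max a₁ a₂) (max 3 (4 / δ)), fun x hx => ?_⟩
  have hx3 : (3 : ℝ) ≤ x := le_trans (le_trans (le_max_left _ _) (le_max_right _ _)) hx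
  have hxδ : 4 / δ ≤ x := le_trans (le_trans (le_max_right _ _) (le_max_right _ _)) hx
  have hxa₁ : a₁ ≤ x := le_trans (le_trans (le_max_left _ _) (le_max_left _ _)) hx
  have hxa₂ : a₂ ≤ x := le_trans (le_trans (le_max_right _ _) (le_max_left _ _)) hx
  have hx1 : (1 : ℝ) < x := by linarith
  have hx0 : (0 : ℝ) < x := by linarith
  have hlogx : 0 < Real.log x := Real.log_pos hx1
  set y : ℝ := x ^ (1 - ε) with hy
  have hy1 : 1 < y := Real.one_lt_rpow_iff_of_pos hx0 |>.mpr (Or.inl ⟨hx1, by linarith⟩)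
  have hlogy : Real.log y = (1 - ε) * Real.log x := Real.log_rpow hx0 (1 - ε)
  have hmain := pi_bound hy1 hx0.le
  -- bound y + 1 ≤ (δ/2) * x / log x
  have hy1' : (y + 1) * Real.log x ≤ (δ / 2) * x := by
    have e1 : Real.log x ≤ (δ / 4) * x ^ ε := ha₁ x hxa₁
    have e2 : Real.log x ≤ (δ / 4) * x := ha₂ x hxa₂
    have e3 : y * Real.log x ≤ (δ / 4) * x := by
      have : y * Real.log x ≤ y * ((δ / 4) * x ^ ε) := by
        apply mul_le_mul_of_nonneg_left e1 (by linarith)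
      calc y * Real.log x ≤ y * ((δ / 4) * x ^ ε) := this
      _ = (δ / 4) * (x ^ (1 - ε) * x ^ ε) := by ring
      _ = (δ / 4) * x := by
        rw [← Real.rpow_add hx0]
        norm_num
    linarith
  have hy2 : y + 1 ≤ (δ / 2) * (x / Real.log x) := by
    have : (δ / 2) * (x / Real.log x) = ((δ / 2) * x) / Real.log x := by ring
    rw [this, le_div_iff₀ hlogx]
    exact hy1'
  -- bound x * log 4 / log y
  have hterm : x * Real.log 4 / Real.log y ≤ (Real.log 4 + δ / 2) * (x / Real.log x) := by
    rw [hlogy]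
    rw [div_le_iff₀ (by nlinarith)]
    have hxdiv : 0 ≤ x / Real.log x := by positivity
    calc x * Real.log 4 ≤ x * ((1 - ε) * (Real.log 4 + δ / 2)) :=
      mul_le_mul_of_nonneg_left hkey hx0.le
    _ = (Real.log 4 + δ / 2) * (x / Real.log x) * ((1 - ε) * Real.log x) := by
      field_simp
  calc (Nat.primeCounting ⌊x⌋₊ : ℝ) ≤ y + 1 + x * Real.log 4 / Real.log y := hmain
  _ ≤ (δ / 2) * (x / Real.log x) + (Real.log 4 + δ / 2) * (x / Real.log x) := by linarith
  _ = (Real.log 4 + δ) * (x / Real.log x) := by ring
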